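/- Let X be a finite connected simple graph that is regular of odd degree. If X is both vertex-transitive and edge-transitive, then X is arc-transitive. -/

import Mathlib

namespace HAT

variable {V : Type*} {W : Type*}

/-- The automorphism group of a simple graph, as a subgroup of the permutation
group of the vertex set. -/
def autSubgroup (X : SimpleGraph V) : Subgroup (Equiv.Perm V) where
  carrier := {g | ∀ u v : V, X.Adj (g u) (g v) ↔ X.Adj u v}
  one_mem' := by intro u v; simp
  mul_mem' := by
    intro a b ha hb u v
    simp only [Equiv.Perm.mul_apply]
    rw [ha, hb]
  inv_mem' := by
    intro a ha u v
    have h := (ha (a⁻¹ u) (a⁻¹ v)).symm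
    simpa using h

/-- A subgroup of the permutation group of the vertex set acts transitively on vertices. -/
def VertexTransitive (G : Subgroup (Equiv.Perm V)) : Prop :=
  ∀ u v : V, ∃ g ∈ G, g u = v

/-- `G` acts transitively on the edges of `X`. -/
def EdgeTransitive (X : SimpleGraph V) (G : Subgroup (Equiv.Perm V)) : Prop :=
  ∀ ⦃u v x y : V⦄, X.Adj u v → X.Adj x y →
    ∃ g ∈ G, (g u = x ∧ g v = y) ∨ (g u = y ∧ g v = x)

/-- `G` acts transitively on the arcs of `X`. -/
def ArcTransitive (X : SimpleGraph V) (G : Subgroup (Equiv.Perm V)) : Prop :=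
  ∀ ⦃u v x y : V⦄, X.Adj u v → X.Adj x y → ∃ g ∈ G, g u = x ∧ g v = y

/-- `G` acts sharply transitively (regularly) on the arcs of `X`. -/
def ArcRegular (X : SimpleGraph V) (G : Subgroup (Equiv.Perm V)) : Prop :=
  ∀ ⦃u v x y : V⦄, X.Adj u v → X.Adj x y →
    ∃! g : G, (g : Equiv.Perm V) u = x ∧ (g : Equiv.Perm V) v = y

/-- `X` is `G`-half-arc-transitive. -/
def HalfArcTransitive (X : SimpleGraph V) (G : Subgroup (Equiv.Perm V)) : Prop :=
  VertexTransitive G ∧ EdgeTransitive X G ∧ ¬ ArcTransitive X G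

/-- `X` is regular of degree `k`. -/
def RegularOfDegree (X : SimpleGraph V) (k : ℕ) : Prop :=
  ∀ v : V, Nat.card (X.neighborSet v) = k

/-- A group of permutations acts semiregularly: all point stabilizers are trivial. -/
def Semiregular (N : Subgroup (Equiv.Perm V)) : Prop :=
  ∀ g ∈ N, (∃ v : V, g v = v) → g = 1

/-- A graph is a Cayley graph iff its automorphism group contains a subgroup
acting regularly (sharply transitively) on the vertices. -/
def IsCayleyGraph (X : SimpleGraph V) : Prop :=
  ∃ H : Subgroup (Equiv.Perm V), H ≤ autSubgroup X ∧
    ∀ u v : V, ∃! h : H, (h : Equiv.Perm V) u = v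

/-- The set of `N`-orbits on the vertex set. -/
abbrev Orbits (N : Subgroup (Equiv.Perm V)) : Type _ := Quotient (MulAction.orbitRel N V)

/-- The `N`-orbit of a vertex. -/
def orbitMk (N : Subgroup (Equiv.Perm V)) (v : V) : Orbits N :=
  Quotient.mk (MulAction.orbitRel N V) v

/-- The quotient graph `X_N`: vertices are the `N`-orbits, two orbits being adjacent
iff some vertex of one is adjacent in `X` to some vertex of the other. -/
def quotientGraph (X : SimpleGraph V) (N : Subgroup (Equiv.Perm V)) :
    SimpleGraph (Orbits N) :=
  SimpleGraph.fromRel (fun B C => ∃ u v : V, orbitMk N u = B ∧ orbitMk N v = C ∧ X.Adj u v)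

/-- `X` is an `N`-regular covering of the quotient graph `X_N`: `N` is semiregular and
the orbit projection maps each neighbourhood bijectively onto the neighbourhood of the
corresponding orbit. -/
def IsRegularCover (X : SimpleGraph V) (N : Subgroup (Equiv.Perm V)) : Prop :=
  Semiregular N ∧
    ∀ v : V, Set.BijOn (orbitMk N) (X.neighborSet v)
      ((quotientGraph X N).neighborSet (orbitMk N v))

/-- The permutations of the orbit set induced by elements of `G` (this is the image of
the natural action of `G/N` when `N` is normal in `G`). -/
def inducedQuotSubgroup (G N : Subgroup (Equiv.Perm V)) :
    Subgroup (Equiv.Perm (Orbits N)) where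
  carrier := {σ | ∃ g ∈ G, ∀ u : V, σ (orbitMk N u) = orbitMk N (g u)}
  one_mem' := ⟨1, G.one_mem, fun u => by simp⟩
  mul_mem' := by
    rintro σ τ ⟨g, hg, hgs⟩ ⟨h, hh, hhs⟩
    refine ⟨g * h, G.mul_mem hg hh, fun u => ?_⟩
    simp [Equiv.Perm.mul_apply, hhs u, hgs (h u)]
  inv_mem' := by
    rintro σ ⟨g, hg, hgs⟩
    refine ⟨g⁻¹, G.inv_mem hg, fun u => ?_⟩
    have h1 := hgs (g⁻¹ u)
    rw [show g (g⁻¹ u) = u from g.apply_symm_apply u] at h1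
    rw [← h1, show σ⁻¹ (σ (orbitMk N (g⁻¹ u))) = orbitMk N (g⁻¹ u) from σ.symm_apply_apply _]

/-- A voltage assignment on the arcs of `Y` with values in the group `K`. -/
def IsVoltage (Y : SimpleGraph W) (K : Type*) [Group K] (ξ : W → W → K) : Prop :=
  ∀ u v : W, Y.Adj u v → ξ v u = (ξ u v)⁻¹

/-- The derived graph `Y ×_ξ K` of a voltage assignment `ξ`. -/
def derivedGraph (Y : SimpleGraph W) {K : Type*} [Group K] (ξ : W → W → K) :
    SimpleGraph (W × K) :=
  SimpleGraph.fromRel (fun a b => Y.Adj a.1 b.1 ∧ b.2 = ξ a.1 b.1 * a.2)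

/-- The graph `X(r; m, n)`: vertices `Z_m × Z_n`, with `(i,j)` adjacent to
`(i+1, j ± r^i)`. -/
def XG (m : ℕ) {n : ℕ} (r : (ZMod n)ˣ) : SimpleGraph (ZMod m × ZMod n) :=
  SimpleGraph.fromRel (fun a b =>
    b.1 = a.1 + 1 ∧
      (b.2 = a.2 + (r : ZMod n) ^ (a.1.val) ∨ b.2 = a.2 - (r : ZMod n) ^ (a.1.val)))

/-- The Praeger–Xu graph `C(2;p,2)`: vertices `Z_p × Z_2 × Z_2`, with `(i,(x,y))`
adjacent to `(i+1,(y,z))`. -/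
def Cp22 (p : ℕ) : SimpleGraph (ZMod p × ZMod 2 × ZMod 2) :=
  SimpleGraph.fromRel (fun a b => b.1 = a.1 + 1 ∧ b.2.1 = a.2.2)

/-- The lexicographic product `C_n[2K_1]`: vertices `Z_n × Z_2`, with `(i,x)`
adjacent to `(j,y)` iff `j = i ± 1`. -/
def cyc2K1 (n : ℕ) : SimpleGraph (ZMod n × ZMod 2) :=
  SimpleGraph.fromRel (fun a b => b.1 = a.1 + 1)

/-- The wreath graph `W(6,2)`: vertices `Z_6 × Z_2`, with `(i,x)` adjacent to `(i+1,y)`. -/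
def W62 : SimpleGraph (ZMod 6 × ZMod 2) :=
  SimpleGraph.fromRel (fun a b => b.1 = a.1 + 1)

/-- Base relation for the Rose Window graph `R_6(5,4)`: `inl i` is `S_i`, `inr i` is `Q_i`. -/
def roseR : (ZMod 6 ⊕ ZMod 6) → (ZMod 6 ⊕ ZMod 6) → Prop
  | Sum.inl i, Sum.inl j => j = i + 1
  | Sum.inl i, Sum.inr j => j = i ∨ i = j + 5
  | Sum.inr i, Sum.inr j => j = i + 4
  | Sum.inr _, Sum.inl _ => False

/-- The Rose Window graph `R_6(5,4)`. -/
def roseWindow : SimpleGraph (ZMod 6 ⊕ ZMod 6) := SimpleGraph.fromRel roseR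

/-- An elementary abelian `q`-group. -/
def IsElementaryAbelian (q : ℕ) (H : Type*) [Group H] : Prop :=
  (∀ a b : H, a * b = b * a) ∧ ∀ x : H, x ≠ 1 → orderOf x = q

/-- Tutte: A finite connected graph, regular of odd degree, which is
both vertex-transitive and edge-transitive, is arc-transitive. -/
theorem stmt13 {V : Type*} [Fintype V] (X : SimpleGraph V) (hconn : X.Connected)
    (k : ℕ) (hk : Odd k) (hreg : RegularOfDegree X k)
    (hv : VertexTransitive (autSubgroup X)) (he : EdgeTransitive X (autSubgroup X)) :
    ArcTransitive X (autSubgroup X) := by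
  classical
  set G := autSubgroup X with hG
  intro u v x y huv hxy
  by_contra hno
  push_neg at hno
  -- D : orbit of the arc (u,v) under G
  set D : V → V → Prop := fun p q => X.Adj p q ∧ ∃ g ∈ G, g u = p ∧ g v = q with hD
  have hDadj : ∀ p q, D p q → X.Adj p q := fun p q h => h.1
  have hD1 : ∀ p q, X.Adj p q → D p q ∨ D q p := by
    intro p q hpq
    obtain ⟨g, hg, hcase⟩ := he huv hpq
    rcases hcase with ⟨h1, h2⟩ | ⟨h1, h2⟩
    · exact Or.inl ⟨hpq, g, hg, h1, h2⟩
    · exact Or.inr ⟨hpq.symm, g, hg, h1, h2⟩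
  have hasym : ∀ p q, D p q → ¬ D q p := by
    rintro p q ⟨hpq, g, hg, hgu, hgv⟩ ⟨hqp, h, hh, hhu, hhv⟩
    have hw : (g⁻¹ * h) ∈ G := G.mul_mem (G.inv_mem hg) hh
    have hwu : (g⁻¹ * h) u = v := by
      simp only [Equiv.Perm.mul_apply, hhu, ← hgv, Equiv.Perm.inv_def, Equiv.symm_apply_apply]
    have hwv : (g⁻¹ * h) v = u := by
      simp only [Equiv.Perm.mul_apply, hhv, ← hgu, Equiv.Perm.inv_def, Equiv.symm_apply_apply]
    rcases hD1 x y hxy with ⟨_, g₂, hg₂, h2u, h2v⟩ | ⟨_, g₃, hg₃, h3u, h3v⟩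
    · exact hno g₂ hg₂ h2u h2v
    · refine hno (g₃ * (g⁻¹ * h)) (G.mul_mem hg₃ hw) ?_ ?_
      · simp [Equiv.Perm.mul_apply, hwu, hwv, h3u, h3v]
      · simp [Equiv.Perm.mul_apply, hwu, hwv, h3u, h3v]
  have hinv : ∀ g ∈ G, ∀ p q, D p q → D (g p) (g q) := by
    rintro g hg p q ⟨hpq, h, hh, hu', hv'⟩
    refine ⟨(hg p q).mpr hpq, g * h, G.mul_mem hg hh, ?_, ?_⟩
    · simp [Equiv.Perm.mul_apply, hu']
    · simp [Equiv.Perm.mul_apply, hv']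
  set outS : V → Finset V := fun a => Finset.univ.filter (fun w => D a w) with houtS
  set inS : V → Finset V := fun a => Finset.univ.filter (fun w => D w a) with hinS
  have hleo : ∀ g ∈ G, ∀ a, (outS a).card ≤ (outS (g a)).card := by
    intro g hg a
    apply Finset.card_le_card_of_injOn (fun w => g w)
    · intro w hw
      simp only [houtS, Finset.mem_filter, Finset.mem_univ, true_and] at hw ⊢
      simpa using hinv g hg a w (by simpa using hw)
    · intro w1 _ w2 _ h
      exact g.injective h
  have hlei : ∀ g ∈ G, ∀ a, (inS a).card ≤ (inS (g a)).card := by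
    intro g hg a
    apply Finset.card_le_card_of_injOn (fun w => g w)
    · intro w hw
      simp only [hinS, Finset.mem_filter, Finset.mem_univ, true_and] at hw ⊢
      simpa using hinv g hg w a (by simpa using hw)
    · intro w1 _ w2 _ h
      exact g.injective h
  have hkey : ∀ (f : V → Finset V), (∀ g ∈ G, ∀ a, (f a).card ≤ (f (g a)).card) →
      ∀ a b, (f a).card = (f b).card := by
    intro f hf a b
    obtain ⟨g, hg, hgab⟩ := hv a b
    have h1 := hf g hg a
    have h2 := hf g⁻¹ (G.inv_mem hg) b
    rw [hgab] at h1
    have hba : g⁻¹ b = a := by rw [← hgab]; simp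
    rw [hba] at h2
    omega
  have houtc := hkey outS hleo
  have hinc := hkey inS hlei
  have hdisj : ∀ a, Disjoint (outS a) (inS a) := by
    intro a
    rw [Finset.disjoint_left]
    intro w h1 h2
    simp only [houtS, hinS, Finset.mem_filter, Finset.mem_univ, true_and] at h1 h2
    exact hasym a w h1 h2
  have hunion : ∀ a, outS a ∪ inS a = X.neighborFinset a := by
    intro a; ext w
    simp only [houtS, hinS, Finset.mem_union, Finset.mem_filter, Finset.mem_univ, true_and,
      SimpleGraph.mem_neighborFinset]
    constructor
    · rintro (h | h)
      · exact hDadj a w h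
      · exact (hDadj w a h).symm
    · intro h; exact hD1 a w h
  have hcard : ∀ a, (outS a).card + (inS a).card = k := by
    intro a
    rw [← Finset.card_union_of_disjoint (hdisj a), hunion a]
    have h := hreg a
    rw [Nat.card_eq_fintype_card] at h
    simpa [SimpleGraph.neighborFinset, Set.toFinset_card] using h
  -- double counting
  set S : Finset (V × V) := Finset.univ.filter (fun p => D p.1 p.2) with hS
  have hfib1 : ∀ a : V, (S.filter (fun p => p.1 = a)).card = (outS a).card := by
    intro a
    have himg : S.filter (fun p => p.1 = a) = (outS a).image (fun w => (a, w)) := by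
      ext p
      simp only [hS, houtS, Finset.mem_filter, Finset.mem_univ, true_and, Finset.mem_image]
      constructor
      · rintro ⟨hDp, h1⟩
        exact ⟨p.2, by rw [← h1]; exact hDp, by rw [← h1]⟩
      · rintro ⟨w, hw, rfl⟩
        exact ⟨hw, rfl⟩
    rw [himg, Finset.card_image_of_injective _ (fun w1 w2 h => (Prod.ext_iff.mp h).2)]
  have hfib2 : ∀ a : V, (S.filter (fun p => p.2 = a)).card = (inS a).card := by
    intro a
    have himg : S.filter (fun p => p.2 = a) = (inS a).image (fun w => (w, a)) := by
      ext p
      simp only [hS, hinS, Finset.mem_filter, Finset.mem_univ, true_and, Finset.mem_image]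
      constructor
      · rintro ⟨hDp, h1⟩
        exact ⟨p.1, by rw [← h1]; exact hDp, by rw [← h1]⟩
      · rintro ⟨w, hw, rfl⟩
        exact ⟨hw, rfl⟩
    rw [himg, Finset.card_image_of_injective _ (fun w1 w2 h => (Prod.ext_iff.mp h).1)]
  have h1 : S.card = Fintype.card V * (outS u).card := by
    rw [Finset.card_eq_sum_card_fiberwise (f := Prod.fst) (t := Finset.univ)
      (fun _ _ => Finset.mem_univ _)]
    rw [Finset.sum_congr rfl (fun a _ => (hfib1 a).trans (houtc a u))]
    simp [Finset.sum_const, Finset.card_univ, mul_comm]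
  have h2 : S.card = Fintype.card V * (inS u).card := by
    rw [Finset.card_eq_sum_card_fiberwise (f := Prod.snd) (t := Finset.univ)
      (fun _ _ => Finset.mem_univ _)]
    rw [Finset.sum_congr rfl (fun a _ => (hfib2 a).trans (hinc a u))]
    simp [Finset.sum_const, Finset.card_univ, mul_comm]
  have hpos : 0 < Fintype.card V := Fintype.card_pos_iff.mpr ⟨u⟩
  have heq : (outS u).card = (inS u).card := by
    have := h1.symm.trans h2
    exact Nat.eq_of_mul_eq_mul_left hpos this
  obtain ⟨m, hm⟩ := hk
  have := hcard u
  omega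

end HAT
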